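/- For every real number c ≥ 1, the quantity z₂(c) = 128·c⁴·(c−1)²·(c²−2c+2)²·(c−2)⁴ / (c⁴−8c²+16c−8)⁴ satisfies 0 ≤ z₂(c) < 0.6 and log(1 − z₂(c)) ≥ −128/c². -/

import Mathlib

open Real

/-- The quantity `z₂(c)` arising from the duplication map on `E'_a`:
if `x(P') = c·√a`, then `z(2P') = 1 − z₂(c)`. -/
noncomputable def ztwo (c : ℝ) : ℝ :=
  128 * c ^ 4 * (c - 1) ^ 2 * (c ^ 2 - 2 * c + 2) ^ 2 * (c - 2) ^ 4 /
    (c ^ 4 - 8 * c ^ 2 + 16 * c - 8) ^ 4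

private lemma q_ge_one {c : ℝ} (hc : 1 ≤ c) :
    1 ≤ c ^ 4 - 8 * c ^ 2 + 16 * c - 8 := by
  obtain ⟨t, ht, rfl⟩ : ∃ t, 0 ≤ t ∧ c = 1 + t := ⟨c - 1, by linarith, by ring⟩
  have hcub : 0 ≤ t ^ 3 + 4 * t ^ 2 - 2 * t + 4 := by
    nlinarith [sq_nonneg (2 * t - 1 / 2), pow_nonneg ht 3]
  have key : (1 + t) ^ 4 - 8 * (1 + t) ^ 2 + 16 * (1 + t) - 8 - 1 = t * (t ^ 3 + 4 * t ^ 2 - 2 * t + 4) := by ring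
  nlinarith [mul_nonneg ht hcub]

private lemma num_nonneg (c : ℝ) :
    0 ≤ 128 * c ^ 4 * (c - 1) ^ 2 * (c ^ 2 - 2 * c + 2) ^ 2 * (c - 2) ^ 4 := by
  positivity

/-- Key polynomial inequality for the `0.6` bound:  `5·N ≤ 3·q⁴ - 1`. -/
private lemma bound06 {c : ℝ} (hc : 1 ≤ c) :
    5 * (128 * c ^ 4 * (c - 1) ^ 2 * (c ^ 2 - 2 * c + 2) ^ 2 * (c - 2) ^ 4) + 1 ≤
      3 * (c ^ 4 - 8 * c ^ 2 + 16 * c - 8) ^ 4 := by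
  obtain ⟨t, ht, rfl⟩ : ∃ t, 0 ≤ t ∧ c = 1 + t := ⟨c - 1, by linarith, by ring⟩
  have h1 : 0 ≤ 48 - 318 * t + 528 * t ^ 2 := by nlinarith [sq_nonneg (1056 * t - 318)]
  have h2 : 0 ≤ 2 - 58 * t ^ 2 + 422 * t ^ 4 := by nlinarith [sq_nonneg (844 * t ^ 2 - 58)]
  have h3 : 0 ≤ 3256 - 1776 * t + 243 * t ^ 2 := by nlinarith [sq_nonneg (486 * t - 1776)]
  have h4 : 0 ≤ 243 - 1776 * t + 3256 * t ^ 2 := by nlinarith [sq_nonneg (6512 * t - 1776)]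
  have h5 : 0 ≤ 528 - 318 * t + 48 * t ^ 2 := by nlinarith [sq_nonneg (96 * t - 318)]
  have h6 : 0 ≤ 281 - 58 * t ^ 2 + 3 * t ^ 4 := by nlinarith [sq_nonneg (6 * t ^ 2 - 58)]
  have key : 3 * ((1+t) ^ 4 - 8 * (1+t) ^ 2 + 16 * (1+t) - 8) ^ 4 -
      (5 * (128 * (1+t) ^ 4 * ((1+t) - 1) ^ 2 * ((1+t) ^ 2 - 2 * (1+t) + 2) ^ 2 * ((1+t) - 2) ^ 4) + 1) =
      t ^ 1 * (48 - 318 * t + 528 * t ^ 2) + (2 - 58 * t ^ 2 + 422 * t ^ 4) +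
      t ^ 6 * (3256 - 1776 * t + 243 * t ^ 2) + t ^ 8 * (243 - 1776 * t + 3256 * t ^ 2) +
      t ^ 13 * (528 - 318 * t + 48 * t ^ 2) + t ^ 12 * (281 - 58 * t ^ 2 + 3 * t ^ 4) +
      1134 * t ^ 4 + 1200 * t ^ 5 + 2924 * t ^ 8 + 1200 * t ^ 11 + 1275 * t ^ 12 := by ring
  nlinarith [mul_nonneg (pow_nonneg ht 1) h1, mul_nonneg (pow_nonneg ht 6) h3,
    mul_nonneg (pow_nonneg ht 8) h4, mul_nonneg (pow_nonneg ht 13) h5,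
    mul_nonneg (pow_nonneg ht 12) h6, pow_nonneg ht 4, pow_nonneg ht 5,
    pow_nonneg ht 8, pow_nonneg ht 11, pow_nonneg ht 12, h2]

/-- Key polynomial inequality for the log bound: `(c² + 128)·(N/128) ≤ q⁴`. -/
private lemma boundlog {c : ℝ} (hc : 1 ≤ c) :
    (c ^ 2 + 128) * (c ^ 4 * (c - 1) ^ 2 * (c ^ 2 - 2 * c + 2) ^ 2 * (c - 2) ^ 4) ≤
      (c ^ 4 - 8 * c ^ 2 + 16 * c - 8) ^ 4 := by
  obtain ⟨t, ht, rfl⟩ : ∃ t, 0 ≤ t ∧ c = 1 + t := ⟨c - 1, by linarith, by ring⟩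
  have h1 : 0 ≤ 16 - 41 * t + 27 * t ^ 2 := by nlinarith [sq_nonneg (54 * t - 41)]
  have h2 : 0 ≤ 1003 - 590 * t + 87 * t ^ 2 := by nlinarith [sq_nonneg (174 * t - 590)]
  have h3 : 0 ≤ 91 - 600 * t + 997 * t ^ 2 := by nlinarith [sq_nonneg (1994 * t - 600)]
  have h4 : 0 ≤ 180 - 39 * t + 3 * t ^ 2 := by nlinarith [sq_nonneg (6 * t - 39)]
  have key : ((1+t) ^ 4 - 8 * (1+t) ^ 2 + 16 * (1+t) - 8) ^ 4 -
      ((1+t) ^ 2 + 128) * ((1+t) ^ 4 * ((1+t) - 1) ^ 2 * ((1+t) ^ 2 - 2 * (1+t) + 2) ^ 2 * ((1+t) - 2) ^ 4) =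
      1 + t ^ 1 * (16 - 41 * t + 27 * t ^ 2) + t ^ 6 * (1003 - 590 * t + 87 * t ^ 2) +
      t ^ 8 * (91 - 600 * t + 997 * t ^ 2) + t ^ 13 * (180 - 39 * t + 3 * t ^ 2) +
      147 * t ^ 3 + 349 * t ^ 4 + 404 * t ^ 5 + 1297 * t ^ 8 + 402 * t ^ 11 +
      351 * t ^ 12 + 11 * t ^ 15 := by ring
  nlinarith [mul_nonneg (pow_nonneg ht 1) h1, mul_nonneg (pow_nonneg ht 6) h2,
    mul_nonneg (pow_nonneg ht 8) h3, mul_nonneg (pow_nonneg ht 13) h4,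
    pow_nonneg ht 3, pow_nonneg ht 4, pow_nonneg ht 5, pow_nonneg ht 8,
    pow_nonneg ht 11, pow_nonneg ht 12, pow_nonneg ht 15]

/-- For every real `c ≥ 1`: `0 ≤ z₂(c) < 0.6` and `log(1 − z₂(c)) ≥ −128/c²`. -/
theorem ztwo_bounds (c : ℝ) (hc : 1 ≤ c) :
    0 ≤ ztwo c ∧ ztwo c < 0.6 ∧ Real.log (1 - ztwo c) ≥ -(128 / c ^ 2) := by
  have hq : 1 ≤ c ^ 4 - 8 * c ^ 2 + 16 * c - 8 := q_ge_one hc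
  have hq0 : (0:ℝ) < c ^ 4 - 8 * c ^ 2 + 16 * c - 8 := by linarith
  have hq4 : (0:ℝ) < (c ^ 4 - 8 * c ^ 2 + 16 * c - 8) ^ 4 := by positivity
  have hN := num_nonneg c
  have hz0 : 0 ≤ ztwo c := div_nonneg hN (le_of_lt hq4)
  have hz06 : ztwo c < 0.6 := by
    rw [ztwo, div_lt_iff₀ hq4]
    have := bound06 hc
    nlinarith
  have hc0 : (0:ℝ) < c := lt_of_lt_of_le one_pos hc
  have hc2 : (0:ℝ) < c ^ 2 := by positivity
  refine ⟨hz0, hz06, ?_⟩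
  -- 1 - ztwo c > 0
  have hy : (0:ℝ) < 1 - ztwo c := by linarith
  -- log (1 - z) ≥ -(z / (1 - z)) since log x ≤ x - 1
  have hlog : Real.log (1 - ztwo c) ≥ -(ztwo c / (1 - ztwo c)) := by
    have h := Real.log_le_sub_one_of_pos (show (0:ℝ) < (1 - ztwo c)⁻¹ by positivity)
    rw [Real.log_inv] at h
    have : (1 - ztwo c)⁻¹ - 1 = ztwo c / (1 - ztwo c) := by
      field_simp
      ring
    linarith [this ▸ h]
  -- z / (1 - z) ≤ 128 / c²
  have hfrac : ztwo c / (1 - ztwo c) ≤ 128 / c ^ 2 := by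
    rw [div_le_div_iff₀ hy hc2]
    -- c² * z ≤ 128 * (1 - z)
    have key := boundlog hc
    have hzdef : ztwo c * (c ^ 4 - 8 * c ^ 2 + 16 * c - 8) ^ 4 =
        128 * c ^ 4 * (c - 1) ^ 2 * (c ^ 2 - 2 * c + 2) ^ 2 * (c - 2) ^ 4 := by
      rw [ztwo, div_mul_cancel₀ _ hq4.ne']
    -- from key: (c²+128) * N ≤ 128 * q⁴, so c² * z + 128 * z ≤ 128
    have h2 : (c ^ 2 + 128) * (ztwo c * (c ^ 4 - 8 * c ^ 2 + 16 * c - 8) ^ 4) ≤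
        128 * (c ^ 4 - 8 * c ^ 2 + 16 * c - 8) ^ 4 := by
      rw [hzdef]; nlinarith [key]
    have h3 : (c ^ 2 + 128) * ztwo c ≤ 128 := by
      have := (mul_le_mul_iff_of_pos_right hq4).mp (by nlinarith [h2] :
        ((c ^ 2 + 128) * ztwo c) * (c ^ 4 - 8 * c ^ 2 + 16 * c - 8) ^ 4 ≤
          128 * (c ^ 4 - 8 * c ^ 2 + 16 * c - 8) ^ 4)
      linarith [this]
    nlinarith [h3]
  linarith [hlog, hfrac]
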